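/- Let G be a group acting by homeomorphisms on compact Hausdorff proximal minimal flows X and Y, where a flow is proximal if for any two points x, y there is a net (g_i) in G with lim g_i·x = lim g_i·y. Then any endomorphism of the minimal proximal flow X (continuous G-equivariant map X → X) is the identity. -/
import Mathlib

open Filter Topology

/-- Every endomorphism (continuous `G`-equivariant self-map) of a minimal proximal compact
Hausdorff `G`-flow is the identity. -/
theorem endomorphism_of_minimal_proximal_flow_is_identity
    (G : Type*) [Group G]
    (X : Type*) [TopologicalSpace X] [CompactSpace X] [T2Space X] [MulAction G X]
    (hcont : ∀ g : G, Continuous fun x : X => g • x)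
    (hminimal : ∀ x : X, Dense (Set.range fun g : G => g • x))
    (hproximal : ∀ x y : X, ∃ (ι : Type) (l : Filter ι), l.NeBot ∧
      ∃ (g : ι → G) (z : X),
        Tendsto (fun i => g i • x) l (𝓝 z) ∧ Tendsto (fun i => g i • y) l (𝓝 z)) :
    ∀ φ : X → X, Continuous φ → (∀ (g : G) (x : X), φ (g • x) = g • φ x) →
      φ = id := by
  intro φ hφ heq
  funext x
  obtain ⟨ι, l, hl, g, z, h1, h2⟩ := hproximal x (φ x)
  have h3 : Tendsto (fun i => φ (g i • x)) l (𝓝 (φ z)) := (hφ.tendsto z).comp h1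
  have h4 : Tendsto (fun i => φ (g i • x)) l (𝓝 z) := by
    simpa [heq] using h2
  have hz : φ z = z := tendsto_nhds_unique h3 h4
  have hclosed : IsClosed {w : X | φ w = w} := isClosed_eq hφ continuous_id
  have hsub : Set.range (fun g : G => g • z) ⊆ {w : X | φ w = w} := by
    rintro _ ⟨g, rfl⟩
    simp [Set.mem_setOf_eq, heq, hz]
  have hx : x ∈ closure {w : X | φ w = w} := closure_mono hsub ((hminimal z) x)
  rw [hclosed.closure_eq] at hx
  exact hx
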